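/- If Λ = (1/√ε) · artanh(1 - ε/2) and U solves U' + U² + K = 0 on [0, Λ] with K ≤ -ε and U(0) ≥ 0, then U(Λ) ≥ √ε(1 - ε/2). -/

import Mathlib

open Set

/-- The inverse hyperbolic tangent. -/
noncomputable def artanh (x : ℝ) : ℝ := (1 / 2) * Real.log ((1 + x) / (1 - x))

lemma hasDerivAt_tanh (x : ℝ) : HasDerivAt Real.tanh (1 - Real.tanh x ^ 2) x := by
  have hc : Real.cosh x ≠ 0 := (Real.cosh_pos x).ne'
  have h : HasDerivAt (fun y => Real.sinh y / Real.cosh y)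
      ((Real.cosh x * Real.cosh x - Real.sinh x * Real.sinh x) / Real.cosh x ^ 2) x :=
    (Real.hasDerivAt_sinh x).div (Real.hasDerivAt_cosh x) hc
  have : (Real.cosh x * Real.cosh x - Real.sinh x * Real.sinh x) / Real.cosh x ^ 2
      = 1 - Real.tanh x ^ 2 := by
    rw [Real.tanh_eq_sinh_div_cosh]
    have := Real.cosh_sq_sub_sinh_sq x
    field_simp
  rw [this] at h
  exact h.congr_of_eventuallyEq (Filter.Eventually.of_forall fun y => Real.tanh_eq_sinh_div_cosh y)

lemma tanh_artanh {x : ℝ} (h0 : -1 < x) (h1 : x < 1) : Real.tanh (artanh x) = x := by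
  have hy : (0:ℝ) < (1 + x) / (1 - x) := div_pos (by linarith) (by linarith)
  set s := Real.sqrt ((1 + x) / (1 - x)) with hs
  have hs0 : 0 < s := Real.sqrt_pos.2 hy
  have hlog : artanh x = Real.log s := by
    rw [artanh, hs, Real.log_sqrt hy.le]; ring
  have hexp : Real.exp (artanh x) = s := by rw [hlog, Real.exp_log hs0]
  have hexpn : Real.exp (-(artanh x)) = 1 / s := by
    rw [Real.exp_neg, hexp]; ring
  have hsq : s ^ 2 = (1 + x) / (1 - x) := Real.sq_sqrt hy.le
  rw [Real.tanh_eq_sinh_div_cosh, Real.sinh_eq, Real.cosh_eq, hexp, hexpn]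
  have h1x : (1:ℝ) - x ≠ 0 := by linarith
  rw [eq_div_iff (by linarith : (1:ℝ) - x ≠ 0)] at hsq
  field_simp
  nlinarith [hsq, hs0]

/-- If `Λ = (1/√ε) artanh(1 - ε/2)` and `U` solves `U' + U² + K = 0` on `[0,Λ]`
with `K ≤ -ε` and `U 0 ≥ 0`, then `U Λ ≥ √ε (1 - ε/2)`. -/
theorem stmt_8 (ε : ℝ) (hε0 : 0 < ε) (hε1 : ε < 1)
    (Λ : ℝ) (hΛ : Λ = (1 / Real.sqrt ε) * artanh (1 - ε / 2))
    (K U : ℝ → ℝ)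
    (hKcont : ContinuousOn K (Icc 0 Λ))
    (hK : ∀ t ∈ Icc 0 Λ, K t ≤ -ε)
    (hU : ∀ t ∈ Icc 0 Λ, HasDerivAt U (-(U t) ^ 2 - K t) t)
    (hU0 : 0 ≤ U 0) :
    Real.sqrt ε * (1 - ε / 2) ≤ U Λ := by
  have hsε : 0 < Real.sqrt ε := Real.sqrt_pos.2 hε0
  have hx0 : (0:ℝ) < 1 - ε / 2 := by linarith
  have hx1 : (1:ℝ) - ε / 2 < 1 := by linarith
  have hart : 0 < artanh (1 - ε / 2) := by
    rw [artanh]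
    have : (1:ℝ) < (1 + (1 - ε / 2)) / (1 - (1 - ε / 2)) := by
      rw [lt_div_iff₀ (by linarith)]; linarith
    have hl := Real.log_pos this
    linarith
  have hΛpos : 0 < Λ := by rw [hΛ]; exact mul_pos (by positivity) hart
  have hεΛ : Real.sqrt ε * Λ = artanh (1 - ε / 2) := by
    rw [hΛ]; field_simp
  -- comparison function V
  set V : ℝ → ℝ := fun t => Real.sqrt ε * Real.tanh (Real.sqrt ε * t) with hVdef
  have hV : ∀ t, HasDerivAt V (ε - V t ^ 2) t := by
    intro t
    have h1 : HasDerivAt (fun t : ℝ => Real.sqrt ε * t) (Real.sqrt ε) t := by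
      simpa using (hasDerivAt_id t).const_mul (Real.sqrt ε)
    have h2 := ((hasDerivAt_tanh (Real.sqrt ε * t)).comp t h1).const_mul (Real.sqrt ε)
    have hε' : Real.sqrt ε * Real.sqrt ε = ε := Real.mul_self_sqrt hε0.le
    refine h2.congr_deriv ?_
    simp only [hVdef]
    ring_nf
    nlinarith [hε']
  have htanhc : Continuous Real.tanh :=
    continuous_iff_continuousAt.2 fun x => (hasDerivAt_tanh x).continuousAt
  have hVcont : Continuous V :=
    continuous_const.mul (htanhc.comp (continuous_const.mul continuous_id))
  have hV0 : V 0 = 0 := by simp [hVdef]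
  have hVΛ : V Λ = Real.sqrt ε * (1 - ε / 2) := by
    rw [hVdef]
    simp only []
    rw [hεΛ, tanh_artanh (by linarith) hx1]
  -- continuous extension of U
  have hUcont : ContinuousOn U (Icc 0 Λ) := fun t ht =>
    (hU t ht).continuousAt.continuousWithinAt
  set p : ℝ → ℝ := fun t => max 0 (min t Λ) with hpdef
  have hpmem : ∀ t, p t ∈ Icc 0 Λ := fun t =>
    ⟨le_max_left _ _, max_le hΛpos.le (min_le_right _ _)⟩
  have hpeq : ∀ t ∈ Icc 0 Λ, p t = t := fun t ht => by
    simp [hpdef, min_eq_left ht.2, max_eq_right ht.1]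
  set Uc : ℝ → ℝ := fun t => U (p t) with hUcdef
  have hUceq : ∀ t ∈ Icc 0 Λ, Uc t = U t := fun t ht => by
    simp [hUcdef, hpeq t ht]
  have hUccont : Continuous Uc :=
    hUcont.comp_continuous (continuous_const.max (continuous_id.min continuous_const)) hpmem
  -- integrating factor
  set g : ℝ → ℝ := fun t => Uc t + V t with hgdef
  have hgcont : Continuous g := hUccont.add hVcont
  set F : ℝ → ℝ := fun t => ∫ s in (0:ℝ)..t, g s with hFdef
  have hF : ∀ t, HasDerivAt F (g t) t := fun t =>
    (hgcont.integral_hasStrictDerivAt 0 t).hasDerivAt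
  set φ : ℝ → ℝ := fun t => (Uc t - V t) * Real.exp (F t) with hφdef
  have hφcont : Continuous φ := by fun_prop
  have hφ' : ∀ t ∈ Ioo 0 Λ, HasDerivAt φ ((-(K t) - ε) * Real.exp (F t)) t := by
    intro t ht
    have htI : t ∈ Icc 0 Λ := ⟨ht.1.le, ht.2.le⟩
    have hUc : HasDerivAt Uc (-(U t) ^ 2 - K t) t := by
      refine (hU t htI).congr_of_eventuallyEq ?_
      filter_upwards [Ioo_mem_nhds ht.1 ht.2] with s hs
      exact hUceq s ⟨hs.1.le, hs.2.le⟩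
    have h := ((hUc.sub (hV t)).mul ((hF t).exp))
    refine h.congr_deriv ?_
    have h1 : Uc t = U t := hUceq t htI
    have h2 : g t = U t + V t := by rw [hgdef]; simp [h1]
    rw [Pi.sub_apply, h1, h2]
    ring
  have hmono : MonotoneOn φ (Icc 0 Λ) := by
    refine monotoneOn_of_deriv_nonneg (convex_Icc 0 Λ) hφcont.continuousOn
      (fun t ht => ?_) (fun t ht => ?_)
    · rw [interior_Icc] at ht
      exact ((hφ' t ht).differentiableAt).differentiableWithinAt
    · rw [interior_Icc] at ht
      rw [(hφ' t ht).deriv]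
      have hk := hK t ⟨ht.1.le, ht.2.le⟩
      exact mul_nonneg (by linarith) (Real.exp_pos _).le
  have h0m : (0:ℝ) ∈ Icc 0 Λ := ⟨le_refl 0, hΛpos.le⟩
  have hΛm : Λ ∈ Icc 0 Λ := ⟨hΛpos.le, le_refl Λ⟩
  have hφ0 : 0 ≤ φ 0 := by
    have : φ 0 = (U 0 - 0) * Real.exp (F 0) := by
      rw [hφdef]; simp only []
      rw [hUceq 0 h0m, hV0]
    rw [this]
    exact mul_nonneg (by simpa using hU0) (Real.exp_pos _).le
  have key := hmono h0m hΛm hΛpos.le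
  have hφΛ : 0 ≤ (U Λ - V Λ) * Real.exp (F Λ) := by
    have : φ Λ = (U Λ - V Λ) * Real.exp (F Λ) := by
      rw [hφdef]; simp only []; rw [hUceq Λ hΛm]
    linarith [hφ0.trans key, this ▸ (hφ0.trans key)]
  have hexp : 0 < Real.exp (F Λ) := Real.exp_pos _
  nlinarith [hVΛ, hφΛ, hexp]
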